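/- A word over {+, −, ±} is a normal form for the signature rewriting system (i.e., no rule applies) if and only if it has the form −^a ±^b +^c for nonnegative integers a, b, c. -/

import Mathlib

/-- The three-letter alphabet `{+, −, ±}` of signatures. -/
inductive Letter
  | plus
  | minus
  | pm
  deriving DecidableEq

/-- Value of a letter: `v(+) = 1`, `v(−) = −1`, `v(±) = 0`. -/
def Letter.val : Letter → ℤ
  | .plus => 1
  | .minus => -1
  | .pm => 0

/-- The sum of values of a word. -/
def wordVal (w : List Letter) : ℤ := (w.map Letter.val).sum

/-- One application of a signature reduction rule to a contiguous subword:
'+−' ↦ ε, '+±−' ↦ ε, '+±' ↦ '+', '±−' ↦ '−'. -/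
inductive Step : List Letter → List Letter → Prop
  | plus_minus (x y : List Letter) :
      Step (x ++ [Letter.plus, Letter.minus] ++ y) (x ++ y)
  | plus_pm_minus (x y : List Letter) :
      Step (x ++ [Letter.plus, Letter.pm, Letter.minus] ++ y) (x ++ y)
  | plus_pm (x y : List Letter) :
      Step (x ++ [Letter.plus, Letter.pm] ++ y) (x ++ [Letter.plus] ++ y)
  | pm_minus (x y : List Letter) :
      Step (x ++ [Letter.pm, Letter.minus] ++ y) (x ++ [Letter.minus] ++ y)

/-- Rank of a letter in the order `− < ± < +`. -/
def rnk : Letter → ℕ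
  | .minus => 0
  | .pm => 1
  | .plus => 2

lemma step_iff (w : List Letter) :
    (∃ u, Step w u) ↔ ∃ x p q y, w = x ++ [p, q] ++ y ∧ rnk q < rnk p := by
  constructor
  · rintro ⟨u, hs⟩
    cases hs with
    | plus_minus x y => exact ⟨x, .plus, .minus, y, rfl, by decide⟩
    | plus_pm_minus x y => exact ⟨x, .plus, .pm, .minus :: y, by simp, by decide⟩
    | plus_pm x y => exact ⟨x, .plus, .pm, y, rfl, by decide⟩
    | pm_minus x y => exact ⟨x, .pm, .minus, y, rfl, by decide⟩
  · rintro ⟨x, p, q, y, rfl, hlt⟩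
    cases p <;> cases q <;> simp [rnk] at hlt
    · exact ⟨x ++ y, Step.plus_minus x y⟩
    · exact ⟨x ++ [Letter.plus] ++ y, Step.plus_pm x y⟩
    · exact ⟨x ++ [Letter.minus] ++ y, Step.pm_minus x y⟩

lemma chain_middle {R : Letter → Letter → Prop} :
    ∀ (x : List Letter) {p q : Letter} {y : List Letter},
      List.Chain' R (x ++ [p, q] ++ y) → R p q
  | [], p, q, y, h => (List.isChain_cons_cons.mp h).1
  | _ :: x, _, _, _, h => chain_middle x h.tail

lemma chain_form (a b c : ℕ) :
    List.Chain' (fun p q => rnk p ≤ rnk q)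
      (List.replicate a Letter.minus ++ List.replicate b Letter.pm ++
        List.replicate c Letter.plus) := by
  show List.IsChain _ _
  rw [List.isChain_append, List.isChain_append]
  refine ⟨⟨List.isChain_replicate_of_rel _ le_rfl, List.isChain_replicate_of_rel _ le_rfl, ?_⟩,
    List.isChain_replicate_of_rel _ le_rfl, ?_⟩
  · intro p hp q hq
    cases a with
    | zero => simp at hp
    | succ a =>
      cases b with
      | zero => simp at hq
      | succ b =>
        simp [List.getLast?_replicate, List.head?_replicate] at hp hq
        subst hp; subst hq; decide
  · intro p hp q hq
    cases c with
    | zero => simp at hq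
    | succ c =>
      simp [List.head?_replicate] at hq
      subst hq
      rcases List.mem_of_mem_getLast? hp with hmem
      rcases List.mem_append.mp hmem with h | h <;>
        · have := List.eq_of_mem_replicate h
          subst this; simp [rnk]

lemma nodescent_form : ∀ w : List Letter,
    (∀ x p q y, w = x ++ [p, q] ++ y → rnk p ≤ rnk q) →
      ∃ a b c : ℕ, w = List.replicate a Letter.minus ++
        List.replicate b Letter.pm ++ List.replicate c Letter.plus := by
  intro w
  induction w with
  | nil => exact fun _ => ⟨0, 0, 0, rfl⟩
  | cons h t ih =>
    intro H
    obtain ⟨a, b, c, ht⟩ := ih (fun x p q y hx => H (h :: x) p q y (by simp [hx]))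
    cases h with
    | minus =>
      exact ⟨a + 1, b, c, by simp [ht, List.replicate_succ]⟩
    | pm =>
      cases a with
      | zero =>
        exact ⟨0, b + 1, c, by simp [ht, List.replicate_succ]⟩
      | succ a =>
        have := H [] .pm .minus
          (List.replicate a Letter.minus ++ List.replicate b Letter.pm ++
            List.replicate c Letter.plus) (by simp [ht, List.replicate_succ])
        simp [rnk] at this
    | plus =>
      cases a with
      | succ a =>
        have := H [] .plus .minus
          (List.replicate a Letter.minus ++ List.replicate b Letter.pm ++
            List.replicate c Letter.plus) (by simp [ht, List.replicate_succ])
        simp [rnk] at this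
      | zero =>
        cases b with
        | succ b =>
          have := H [] .plus .pm
            (List.replicate b Letter.pm ++ List.replicate c Letter.plus)
            (by simp [ht, List.replicate_succ])
          simp [rnk] at this
        | zero =>
          exact ⟨0, 0, c + 1, by simp [ht, List.replicate_succ]⟩

/-- A word over `{+, −, ±}` is a normal form for the signature rewriting system
(no rule applies) if and only if it has the form `−^a ±^b +^c`. -/
theorem signature_normal_form_iff (w : List Letter) :
    (¬ ∃ u, Step w u) ↔
      ∃ a b c : ℕ, w = List.replicate a Letter.minus ++
        List.replicate b Letter.pm ++ List.replicate c Letter.plus := by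
  rw [step_iff]
  constructor
  · intro H
    refine nodescent_form w (fun x p q y hx => ?_)
    by_contra hlt
    exact H ⟨x, p, q, y, hx, lt_of_not_ge hlt⟩
  · rintro ⟨a, b, c, rfl⟩ ⟨x, p, q, y, hx, hlt⟩
    have := chain_middle x (hx ▸ chain_form a b c)
    omega
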